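/- Let (δ_n) ⊂ (0, 1/2) with δ_n → 0 and let (x_n) ⊂ ℝ be a sequence converging to x₀ ∈ {0, 1}. Then Φ_{δ_n}(x_n) → +∞ as n → ∞. -/
import Mathlib


open Filter

/-- The degenerate mobility `M(φ) = φ²(1-φ)²`. -/
noncomputable def M (φ : ℝ) : ℝ := φ ^ 2 * (1 - φ) ^ 2

/-- The truncated (nondegenerate) mobility `M_δ`. -/
noncomputable def Md (δ φ : ℝ) : ℝ :=
  if φ ≤ δ then M δ else if φ ≤ 1 - δ then M φ else M (1 - δ)

/-- The entropy density with cutoff `Φ_δ(φ) = ∫_{1/2}^{φ} ∫_{1/2}^{s} dr ds / M_δ(r)`. -/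
noncomputable def Phid (δ φ : ℝ) : ℝ :=
  ∫ s in (1 / 2 : ℝ)..φ, ∫ r in (1 / 2 : ℝ)..s, 1 / Md δ r

lemma M_pos {r : ℝ} (h0 : 0 < r) (h1 : r < 1) : 0 < M r := by
  unfold M
  have : 0 < 1 - r := by linarith
  positivity

lemma Md_pos {δ : ℝ} (h0 : 0 < δ) (h1 : δ < 1 / 2) (r : ℝ) : 0 < Md δ r := by
  unfold Md
  split_ifs with h2 h3
  · exact M_pos h0 (by linarith)
  · exact M_pos (by linarith) (by linarith)
  · exact M_pos (by linarith) (by linarith)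

lemma M_le_sq {r : ℝ} (h0 : 0 ≤ r) (h1 : r ≤ 1) : M r ≤ r ^ 2 := by
  unfold M
  have h2 : (1 - r) ^ 2 ≤ 1 := by nlinarith
  calc r ^ 2 * (1 - r) ^ 2 ≤ r ^ 2 * 1 :=
        mul_le_mul_of_nonneg_left h2 (sq_nonneg r)
    _ = r ^ 2 := mul_one _

lemma Md_le {δ : ℝ} (h0 : 0 < δ) (h1 : δ < 1 / 2) {r : ℝ} (hr : δ ≤ r) :
    Md δ r ≤ r ^ 2 := by
  unfold Md
  split_ifs with h2 h3
  · have : r = δ := le_antisymm h2 hr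
    subst this
    exact M_le_sq h0.le (by linarith)
  · exact M_le_sq (by linarith) (by linarith)
  · calc M (1 - δ) ≤ (1 - δ) ^ 2 := M_le_sq (by linarith) (by linarith)
      _ ≤ r ^ 2 := by nlinarith

lemma Md_continuous {δ : ℝ} (h1 : δ < 1 / 2) : Continuous (Md δ) := by
  have hM : Continuous M := by unfold M; continuity
  unfold Md
  apply Continuous.if_le
  · exact continuous_const
  · apply Continuous.if_le hM continuous_const continuous_id continuous_const
    intro x hx
    have hx' : x = 1 - δ := hx
    rw [hx']
  · exact continuous_id
  · exact continuous_const
  · intro x hx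
    have hx' : x = δ := hx
    rw [hx']
    rw [if_pos (by linarith)]

lemma Md_symm {δ : ℝ} (h0 : 0 < δ) (h1 : δ < 1 / 2) (r : ℝ) :
    Md δ (1 - r) = Md δ r := by
  have hM : ∀ t : ℝ, M (1 - t) = M t := fun t => by unfold M; ring
  unfold Md
  rcases le_or_gt r δ with h | h
  · rcases eq_or_lt_of_le h with rfl | h'
    · rw [if_neg (by linarith), if_pos (by linarith), if_pos le_rfl, hM]
    · rw [if_neg (by linarith), if_neg (by linarith), if_pos h]
      exact hM δ
  · rcases le_or_gt r (1 - δ) with h2 | h2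
    · rcases eq_or_lt_of_le h2 with rfl | h3
      · rw [if_pos (by linarith), if_neg (by linarith), if_pos le_rfl]
        exact (hM δ).symm
      · rw [if_neg (by linarith), if_pos (by linarith), if_neg (by linarith),
          if_pos h2, hM]
    · rw [if_pos (by linarith), if_neg (by linarith), if_neg (by linarith)]
      exact (hM δ).symm

lemma Phid_symm {δ : ℝ} (h0 : 0 < δ) (h1 : δ < 1 / 2) (φ : ℝ) :
    Phid δ (1 - φ) = Phid δ φ := by
  set f : ℝ → ℝ := fun r => 1 / Md δ r with hf
  have hfs : ∀ r, f (1 - r) = f r := by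
    intro r
    simp only [hf, Md_symm h0 h1 r]
  have key : ∀ s : ℝ, (∫ r in (1 / 2 : ℝ)..(1 - s), f r) =
      -∫ r in (1 / 2 : ℝ)..s, f r := by
    intro s
    have h2 : (∫ r in (1 / 2 : ℝ)..(1 - s), f r) =
        ∫ r in (1 / 2 : ℝ)..(1 - s), (fun t => f (1 - t)) (1 - r) := by
      congr 1
      funext r
      simp only [sub_sub_cancel]
    rw [h2, intervalIntegral.integral_comp_sub_left (fun t => f (1 - t)) 1]
    have hb1 : (1 : ℝ) - (1 - s) = s := by ring
    have hb2 : (1 : ℝ) - 1 / 2 = 1 / 2 := by norm_num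
    rw [hb1, hb2]
    rw [intervalIntegral.integral_symm]
    simp only [hfs]
  unfold Phid
  have h2 : (∫ s in (1 / 2 : ℝ)..(1 - φ), ∫ r in (1 / 2 : ℝ)..s, f r) =
      ∫ s in (1 / 2 : ℝ)..(1 - φ),
        (fun t => ∫ r in (1 / 2 : ℝ)..(1 - t), f r) (1 - s) := by
    congr 1
    funext s
    simp only [sub_sub_cancel]
  rw [h2, intervalIntegral.integral_comp_sub_left
    (fun t => ∫ r in (1 / 2 : ℝ)..(1 - t), f r) 1]
  have hb1 : (1 : ℝ) - (1 - φ) = φ := by ring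
  have hb2 : (1 : ℝ) - 1 / 2 = 1 / 2 := by norm_num
  rw [hb1, hb2]
  have h3 : (∫ s in φ..(1 / 2 : ℝ), ∫ r in (1 / 2 : ℝ)..(1 - s), f r) =
      ∫ s in φ..(1 / 2 : ℝ), -(∫ r in (1 / 2 : ℝ)..s, f r) := by
    congr 1
    funext s
    exact key s
  rw [h3, intervalIntegral.integral_neg, intervalIntegral.integral_symm, neg_neg]

lemma Phid_lower {δ x : ℝ} (h0 : 0 < δ) (h1 : δ < 1 / 2) (hx : x ≤ 1 / 2) :
    -Real.log (max x δ) - 2 ≤ Phid δ x := by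
  set m : ℝ := max x δ with hm
  have hm0 : 0 < m := lt_of_lt_of_le h0 (le_max_right _ _)
  have hm2 : m ≤ 1 / 2 := max_le hx h1.le
  set f : ℝ → ℝ := fun r => 1 / Md δ r with hf
  have hfc : Continuous f := by
    apply continuous_const.div (Md_continuous h1)
    intro r
    exact ne_of_gt (Md_pos h0 h1 r)
  have hfnn : ∀ r, 0 ≤ f r := fun r => le_of_lt (by
    simp only [hf]
    exact one_div_pos.mpr (Md_pos h0 h1 r))
  set H : ℝ → ℝ := fun s => ∫ r in s..(1 / 2 : ℝ), f r with hH
  have hHc : Continuous H := by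
    have : Continuous (fun s => ∫ r in (1 / 2 : ℝ)..s, f r) :=
      intervalIntegral.continuous_primitive
        (fun a b => hfc.intervalIntegrable a b) _
    have h2 : H = fun s => -(∫ r in (1 / 2 : ℝ)..s, f r) := by
      funext s
      simp only [hH]
      rw [intervalIntegral.integral_symm]
    rw [h2]
    exact this.neg
  have hPhid : Phid δ x = ∫ s in x..(1 / 2 : ℝ), H s := by
    unfold Phid
    have h2 : (∫ s in (1 / 2 : ℝ)..x, ∫ r in (1 / 2 : ℝ)..s, f r) =
        ∫ s in (1 / 2 : ℝ)..x, -H s := by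
      congr 1
      funext s
      simp only [hH]
      rw [intervalIntegral.integral_symm]
    rw [h2, intervalIntegral.integral_neg, intervalIntegral.integral_symm, neg_neg]
  -- Step 1: shrink the interval from [x, 1/2] to [m, 1/2]
  have hH0 : ∀ s ∈ Set.Ioc x (1 / 2 : ℝ), 0 ≤ H s := by
    intro s hs
    exact intervalIntegral.integral_nonneg hs.2 fun r _ => hfnn r
  have step1 : (∫ s in m..(1 / 2 : ℝ), H s) ≤ ∫ s in x..(1 / 2 : ℝ), H s := by
    apply intervalIntegral.integral_mono_interval (le_max_left x δ) hm2 le_rfl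
    · exact (MeasureTheory.ae_restrict_iff' measurableSet_Ioc).mpr
        (Filter.Eventually.of_forall hH0)
    · exact hHc.intervalIntegrable _ _
  -- Step 2: lower bound the inner integral
  have hint_inv : IntervalIntegrable (fun s : ℝ => 1 / s - 2)
      MeasureTheory.volume m (1 / 2) := by
    apply ContinuousOn.intervalIntegrable
    apply ContinuousOn.sub _ continuousOn_const
    apply ContinuousOn.div continuousOn_const continuousOn_id
    intro r hr
    rw [Set.uIcc_of_le hm2] at hr
    exact ne_of_gt (lt_of_lt_of_le hm0 hr.1)
  have step2 : ∀ s ∈ Set.Icc m (1 / 2 : ℝ), 1 / s - 2 ≤ H s := by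
    intro s hs
    have hs0 : 0 < s := lt_of_lt_of_le hm0 hs.1
    have hzpow : (∫ r in s..(1 / 2 : ℝ), r ^ (-2 : ℤ)) = 1 / s - 2 := by
      rw [integral_zpow (Or.inr ⟨by norm_num,
        Set.notMem_uIcc_of_lt hs0 (by norm_num)⟩)]
      norm_num
      ring
    have hmono : (∫ r in s..(1 / 2 : ℝ), r ^ (-2 : ℤ)) ≤
        ∫ r in s..(1 / 2 : ℝ), f r := by
      apply intervalIntegral.integral_mono_on hs.2
      · apply ContinuousOn.intervalIntegrable
        apply ContinuousOn.zpow₀ continuousOn_id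
        intro r hr
        rw [Set.uIcc_of_le hs.2] at hr
        exact Or.inl (ne_of_gt (lt_of_lt_of_le hs0 hr.1))
      · exact hfc.intervalIntegrable _ _
      · intro r hr
        have hr0 : 0 < r := lt_of_lt_of_le hs0 hr.1
        have hrδ : δ ≤ r := le_trans (le_trans (le_max_right x δ) hs.1) hr.1
        have hMd : Md δ r ≤ r ^ 2 := Md_le h0 h1 hrδ
        have h2 : (r : ℝ) ^ (-2 : ℤ) = 1 / r ^ 2 := by
          rw [zpow_neg, one_div, zpow_two, sq]
        rw [h2]
        simp only [hf]
        exact one_div_le_one_div_of_le (Md_pos h0 h1 r) hMd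
    rw [hzpow] at hmono
    exact hmono
  have step2' : (∫ s in m..(1 / 2 : ℝ), (1 / s - 2)) ≤ ∫ s in m..(1 / 2 : ℝ), H s := by
    apply intervalIntegral.integral_mono_on hm2 hint_inv
      (hHc.intervalIntegrable _ _) step2
  -- Step 3: compute the lower integral
  have hint1 : IntervalIntegrable (fun s : ℝ => 1 / s)
      MeasureTheory.volume m (1 / 2) := by
    apply ContinuousOn.intervalIntegrable
    apply ContinuousOn.div continuousOn_const continuousOn_id
    intro r hr
    rw [Set.uIcc_of_le hm2] at hr
    exact ne_of_gt (lt_of_lt_of_le hm0 hr.1)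
  have step3 : (∫ s in m..(1 / 2 : ℝ), (1 / s - 2)) =
      Real.log (1 / 2) - Real.log m - (1 - 2 * m) := by
    rw [intervalIntegral.integral_sub hint1 (intervalIntegrable_const)]
    rw [integral_one_div (Set.notMem_uIcc_of_lt hm0 (by norm_num))]
    rw [Real.log_div (by norm_num) (ne_of_gt hm0)]
    simp
    ring
  have hlog2 : Real.log (1 / 2) ≥ -1 := by
    rw [Real.log_div one_ne_zero (by norm_num), Real.log_one]
    have := Real.log_le_sub_one_of_pos (by norm_num : (0:ℝ) < 2)
    linarith
  calc -Real.log m - 2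
      ≤ Real.log (1 / 2) - Real.log m - (1 - 2 * m) := by linarith
    _ = ∫ s in m..(1 / 2 : ℝ), (1 / s - 2) := step3.symm
    _ ≤ ∫ s in m..(1 / 2 : ℝ), H s := step2'
    _ ≤ ∫ s in x..(1 / 2 : ℝ), H s := step1
    _ = Phid δ x := hPhid.symm

lemma blowup_at_zero (δ : ℕ → ℝ) (hδ : ∀ n, δ n ∈ Set.Ioo (0 : ℝ) (1 / 2))
    (hδ0 : Tendsto δ atTop (nhds 0)) (x : ℕ → ℝ) (hx : Tendsto x atTop (nhds 0)) :
    Tendsto (fun n => Phid (δ n) (x n)) atTop atTop := by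
  have hmax : Tendsto (fun n => max (x n) (δ n)) atTop (nhds 0) := by
    have := hx.max hδ0
    simpa using this
  have hlog : Tendsto (fun n => -Real.log (max (x n) (δ n)) - 2) atTop atTop := by
    have h1 : Tendsto (fun n => max (x n) (δ n)) atTop (nhdsWithin 0 (Set.Ioi 0)) := by
      rw [tendsto_nhdsWithin_iff]
      exact ⟨hmax, Filter.Eventually.of_forall fun n =>
        lt_max_of_lt_right (hδ n).1⟩
    have h2 : Tendsto (fun n => Real.log (max (x n) (δ n))) atTop atBot :=
      Real.tendsto_log_nhdsGT_zero.comp h1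
    have h3 : Tendsto (fun n => -Real.log (max (x n) (δ n))) atTop atTop :=
      tendsto_neg_atBot_atTop.comp h2
    exact tendsto_atTop_add_const_right _ (-2) h3
  apply tendsto_atTop_mono' atTop _ hlog
  have hev : ∀ᶠ n in atTop, x n ≤ 1 / 2 := by
    filter_upwards [hx.eventually_lt_const (by norm_num : (0:ℝ) < 1 / 2)] with n hn
    exact hn.le
  filter_upwards [hev] with n hn
  exact Phid_lower (hδ n).1 (hδ n).2 hn

/-- If `δ_n → 0` and `x_n → x₀ ∈ {0,1}`, then `Φ_{δ_n}(x_n) → +∞`. -/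
theorem entropy_cutoff_blow_up (δ : ℕ → ℝ) (hδ : ∀ n, δ n ∈ Set.Ioo (0 : ℝ) (1 / 2))
    (hδ0 : Tendsto δ atTop (nhds 0)) (x : ℕ → ℝ) (x₀ : ℝ) (hx₀ : x₀ = 0 ∨ x₀ = 1)
    (hx : Tendsto x atTop (nhds x₀)) :
    Tendsto (fun n => Phid (δ n) (x n)) atTop atTop := by
  rcases hx₀ with h | h
  · subst h
    exact blowup_at_zero δ hδ hδ0 x hx
  · subst h
    have hy : Tendsto (fun n => 1 - x n) atTop (nhds 0) := by
      have := (tendsto_const_nhds (x := (1 : ℝ)) (f := atTop)).sub hx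
      simpa using this
    have := blowup_at_zero δ hδ hδ0 (fun n => 1 - x n) hy
    apply this.congr
    intro n
    exact Phid_symm (hδ n).1 (hδ n).2 (x n)
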